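/- For 0 ≤ a < x ≤ √(2/π), the improper integral ∫_a^x t·sin(2t√(t²−a²))/√(t²−a²) dt converges and is strictly positive when a > 0 (or a = 0 and x > 0). -/

import Mathlib

open MeasureTheory

theorem singular_integral_pos (a x : ℝ) (ha : 0 ≤ a) (hax : a < x)
    (hx : x ≤ Real.sqrt (2 / Real.pi)) :
    IntegrableOn
      (fun t => t * Real.sin (2 * t * Real.sqrt (t ^ 2 - a ^ 2)) / Real.sqrt (t ^ 2 - a ^ 2))
      (Set.Ioc a x) ∧
    0 < ∫ t in a..x,
        t * Real.sin (2 * t * Real.sqrt (t ^ 2 - a ^ 2)) / Real.sqrt (t ^ 2 - a ^ 2) := by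
  set f := fun t => t * Real.sin (2 * t * Real.sqrt (t ^ 2 - a ^ 2)) / Real.sqrt (t ^ 2 - a ^ 2)
  set g' : ℝ → ℝ := fun t => t / Real.sqrt (t ^ 2 - a ^ 2)
  -- g' is integrable on Ioc a x as the nonnegative derivative of √(t²-a²)
  have hg'int : IntegrableOn g' (Set.Ioc a x) := by
    apply intervalIntegral.integrableOn_deriv_of_nonneg
      (g := fun t => Real.sqrt (t ^ 2 - a ^ 2))
    · exact (Real.continuous_sqrt.comp (by continuity)).continuousOn
    · intro t ht
      have hta : a < t := ht.1
      have hpos : 0 < t ^ 2 - a ^ 2 := by nlinarith [ht.1, ha]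
      have h1 : HasDerivAt (fun t : ℝ => t ^ 2 - a ^ 2) (2 * t) t := by
        simpa using ((hasDerivAt_pow 2 t).sub_const (a ^ 2))
      have h2 := (Real.hasDerivAt_sqrt hpos.ne').comp t h1
      refine HasDerivAt.congr_deriv h2 (Eq.symm ?_)
      have hs : 0 < Real.sqrt (t ^ 2 - a ^ 2) := Real.sqrt_pos.mpr hpos
      show t / Real.sqrt (t ^ 2 - a ^ 2) = _
      field_simp
    · intro t ht
      have : 0 < t := lt_of_le_of_lt ha ht.1
      positivity
  -- pointwise bound ‖f t‖ ≤ g' t on Ioc a x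
  have hbound : ∀ t ∈ Set.Ioc a x, ‖f t‖ ≤ g' t := by
    intro t ht
    have hta : a < t := ht.1
    have htpos : 0 < t := lt_of_le_of_lt ha hta
    have hpos : 0 < t ^ 2 - a ^ 2 := by nlinarith
    have hs : 0 < Real.sqrt (t ^ 2 - a ^ 2) := Real.sqrt_pos.mpr hpos
    simp only [f, g', Real.norm_eq_abs, abs_div, abs_mul]
    rw [abs_of_pos htpos, abs_of_pos hs]
    gcongr
    calc t * |Real.sin (2 * t * Real.sqrt (t ^ 2 - a ^ 2))|
        ≤ t * 1 := by
          exact mul_le_mul_of_nonneg_left (Real.abs_sin_le_one _) htpos.le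
      _ = t := mul_one t
  have hmeas : AEStronglyMeasurable f (volume.restrict (Set.Ioc a x)) := by
    apply Measurable.aestronglyMeasurable
    unfold f
    fun_prop
  have hfint : IntegrableOn f (Set.Ioc a x) := by
    apply Integrable.mono' hg'int hmeas
    filter_upwards [ae_restrict_mem measurableSet_Ioc] with t ht
    exact hbound t ht
  refine ⟨hfint, ?_⟩
  -- positivity
  have hxpos : 0 < x := lt_of_le_of_lt ha hax
  have hx2 : x ^ 2 ≤ 2 / Real.pi := by
    have h2 : (0:ℝ) ≤ 2 / Real.pi := by positivity
    nlinarith [Real.sq_sqrt h2, Real.sqrt_nonneg (2 / Real.pi), hxpos]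
  apply intervalIntegral.intervalIntegral_pos_of_pos_on
  · exact (intervalIntegrable_iff_integrableOn_Ioc_of_le hax.le).mpr hfint
  · intro t ht
    have hta : a < t := ht.1
    have htpos : 0 < t := lt_of_le_of_lt ha hta
    have hpos : 0 < t ^ 2 - a ^ 2 := by nlinarith
    have hs : 0 < Real.sqrt (t ^ 2 - a ^ 2) := Real.sqrt_pos.mpr hpos
    have hsle : Real.sqrt (t ^ 2 - a ^ 2) ≤ t := by
      calc Real.sqrt (t ^ 2 - a ^ 2) ≤ Real.sqrt (t ^ 2) :=
            Real.sqrt_le_sqrt (by nlinarith)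
        _ = t := by rw [Real.sqrt_sq htpos.le]
    have harg : 2 * t * Real.sqrt (t ^ 2 - a ^ 2) < Real.pi := by
      have h1 : 2 * t * Real.sqrt (t ^ 2 - a ^ 2) ≤ 2 * x ^ 2 := by
        nlinarith [ht.2, hs.le]
      have hpi : 2 < Real.pi := by linarith [Real.pi_gt_three]
      have h2 : 2 * x ^ 2 ≤ 4 / Real.pi := by
        have hx2' : x ^ 2 * Real.pi ≤ 2 := (le_div_iff₀ Real.pi_pos).mp hx2
        rw [le_div_iff₀ Real.pi_pos]
        nlinarith
      have h3 : 4 / Real.pi < Real.pi := by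
        rw [div_lt_iff₀ Real.pi_pos]
        nlinarith
      linarith
    have hsin : 0 < Real.sin (2 * t * Real.sqrt (t ^ 2 - a ^ 2)) :=
      Real.sin_pos_of_pos_of_lt_pi (by positivity) harg
    exact div_pos (mul_pos htpos hsin) hs
  · exact hax
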